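/- Let S be any index set. For any two disjoint compact B-convex subsets A, D of [0,1]^S (with the product topology), there exist closed B-convex subsets L₁, L₂ of [0,1]^S with L₁ ∪ L₂ = [0,1]^S, L₁ ∩ D = ∅, and L₂ ∩ A = ∅. In other words, the B-convexity on [0,1]^S restricted to closed sets is a normal (T₄) convexity. -/

import Mathlib

open Set

/-- B-convexity in the cube `[0,1]^S`: closure under `(x, y, α) ↦ α·x ∨ y` coordinatewise. -/
def BCube {S : Type*} (C : Set (S → unitInterval)) : Prop :=
  ∀ x ∈ C, ∀ y ∈ C, ∀ α : unitInterval, (fun s => max (α * x s) (y s)) ∈ C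

namespace BCubeAux

variable {S : Type*}

lemma coe_max (a b : unitInterval) : ((max a b : unitInterval) : ℝ) = max (a : ℝ) (b : ℝ) :=
  Monotone.map_max (fun _ _ h => h)

lemma coe_mul (a b : unitInterval) : ((a * b : unitInterval) : ℝ) = (a : ℝ) * b := rfl

lemma uzero_le (x : unitInterval) : (0 : unitInterval) ≤ x := x.2.1

lemma umul_max (α a b : unitInterval) : α * max a b = max (α * a) (α * b) := by
  apply Subtype.ext
  simp only [coe_mul, coe_max]
  exact mul_max_of_nonneg _ _ α.2.1

lemma umul_assoc (a b c : unitInterval) : a * b * c = a * (b * c) := by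
  apply Subtype.ext; simp only [coe_mul]; ring

lemma uzero_mul (a : unitInterval) : 0 * a = 0 := by
  apply Subtype.ext; simp only [coe_mul]; norm_num

lemma umax_zero (a : unitInterval) : max (0 : unitInterval) a = a := max_eq_right (uzero_le a)

/-- scaled joins of elements of `C` -/
inductive Sub (C : Set (S → unitInterval)) : (S → unitInterval) → Prop
  | base (α : unitInterval) {c : S → unitInterval} (hc : c ∈ C) : Sub C (fun s => α * c s)
  | join {w₁ w₂ : S → unitInterval} (h₁ : Sub C w₁) (h₂ : Sub C w₂) :
      Sub C (fun s => max (w₁ s) (w₂ s))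

lemma Sub.scale {C : Set (S → unitInterval)} {w} (α : unitInterval) (h : Sub C w) :
    Sub C (fun s => α * w s) := by
  induction h with
  | @base β c hc =>
      have e : (fun s => α * (β * c s)) = fun s => (α * β) * c s :=
        funext fun s => (umul_assoc α β (c s)).symm
      exact e ▸ Sub.base (α * β) hc
  | @join w₁ w₂ h₁ h₂ ih₁ ih₂ =>
      have e : (fun s => α * max (w₁ s) (w₂ s)) = fun s => max (α * w₁ s) (α * w₂ s) :=
        funext fun s => umul_max _ _ _
      exact e ▸ Sub.join ih₁ ih₂

/-- joining an element of `C` with a `Sub C` element stays in `C` -/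
lemma Sub.join_mem {C : Set (S → unitInterval)} (hC : BCube C) {w} (h : Sub C w) :
    ∀ c ∈ C, (fun s => max (c s) (w s)) ∈ C := by
  induction h with
  | @base β c' hc' =>
      intro c hc
      have e : (fun s => max (c s) (β * c' s)) = fun s => max (β * c' s) (c s) :=
        funext fun s => max_comm _ _
      exact e ▸ hC c' hc' c hc β
  | @join w₁ w₂ h₁ h₂ ih₁ ih₂ =>
      intro c hc
      have e : (fun s => max (c s) (max (w₁ s) (w₂ s)))
          = fun s => max ((fun s => max (c s) (w₁ s)) s) (w₂ s) :=
        funext fun s => (max_assoc _ _ _).symm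
      exact e ▸ ih₂ _ (ih₁ c hc)

/-- The B-convex hull of `C ∪ {z}`. -/
def Hull (C : Set (S → unitInterval)) (z : S → unitInterval) : Set (S → unitInterval) :=
  {x | (∃ β : unitInterval, ∃ c ∈ C, x = fun s => max (β * z s) (c s)) ∨
       (∃ w, Sub C w ∧ x = fun s => max (z s) (w s))}

lemma subset_hull {C : Set (S → unitInterval)} (z : S → unitInterval) : C ⊆ Hull C z := by
  intro c hc
  exact Or.inl ⟨0, c, hc, funext fun s => by rw [uzero_mul, umax_zero]⟩

lemma mem_hull_self {C : Set (S → unitInterval)} {z : S → unitInterval} (hne : C.Nonempty) :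
    z ∈ Hull C z := by
  obtain ⟨c, hc⟩ := hne
  refine Or.inr ⟨fun s => 0 * c s, Sub.base 0 hc, funext fun s => ?_⟩
  show z s = max (z s) (0 * c s)
  rw [uzero_mul, max_eq_left (uzero_le _)]

lemma bcube_hull {C : Set (S → unitInterval)} (hC : BCube C) (z : S → unitInterval) :
    BCube (Hull C z) := by
  intro x hx y hy α
  rcases hx with ⟨β, c, hc, rfl⟩ | ⟨w, hw, rfl⟩ <;>
    rcases hy with ⟨γ, c', hc', rfl⟩ | ⟨w', hw', rfl⟩
  · refine Or.inl ⟨max (α * β) γ, _, hC c hc c' hc' α, funext fun s => Subtype.ext ?_⟩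
    simp only [coe_max, coe_mul]
    rw [mul_max_of_nonneg _ _ α.2.1, max_mul_of_nonneg _ _ (z s).2.1, ← mul_assoc]
    simp only [max_comm, max_assoc, max_left_comm]
  · refine Or.inr ⟨_, Sub.join (Sub.base α hc) hw', funext fun s => Subtype.ext ?_⟩
    simp only [coe_max, coe_mul]
    rw [mul_max_of_nonneg _ _ α.2.1, ← mul_assoc]
    have habZ : (α : ℝ) * (β : ℝ) * (z s : ℝ) ≤ (z s : ℝ) :=
      mul_le_of_le_one_left (z s).2.1 (mul_le_one₀ α.2.2 β.2.1 β.2.2)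
    conv_rhs => rw [← max_eq_right habZ]
    simp only [max_comm, max_assoc, max_left_comm]
  · refine Or.inl ⟨max α γ, _, Sub.join_mem hC (hw.scale α) c' hc',
      funext fun s => Subtype.ext ?_⟩
    simp only [coe_max, coe_mul]
    rw [mul_max_of_nonneg _ _ α.2.1, max_mul_of_nonneg _ _ (z s).2.1]
    simp only [max_comm, max_assoc, max_left_comm]
  · refine Or.inr ⟨_, Sub.join (hw.scale α) hw', funext fun s => Subtype.ext ?_⟩
    simp only [coe_max, coe_mul]
    rw [mul_max_of_nonneg _ _ α.2.1]
    have haZ : (α : ℝ) * (z s : ℝ) ≤ (z s : ℝ) :=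
      mul_le_of_le_one_left (z s).2.1 α.2.2
    conv_rhs => rw [← max_eq_right haZ]
    simp only [max_comm, max_assoc, max_left_comm]

/-- the Pasch-type case where both witnesses have the "scaled z" form, with `β ≤ γ`. -/
lemma common_point_11 {C E : Set (S → unitInterval)} (hC : BCube C) (hE : BCube E)
    {z : S → unitInterval} {β γ : unitInterval} {c e : S → unitInterval}
    (hc : c ∈ C) (he : e ∈ E)
    (hpE : (fun s => max (β * z s) (c s)) ∈ E)
    (hqC : (fun s => max (γ * z s) (e s)) ∈ C)
    (hle : β ≤ γ) : ∃ r, r ∈ C ∧ r ∈ E := by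
  rcases eq_or_ne γ 0 with rfl | hγ
  · have hq : (fun s => max ((0 : unitInterval) * z s) (e s)) = e :=
      funext fun s => by rw [uzero_mul, umax_zero]
    exact ⟨e, hq ▸ hqC, he⟩
  · have hγne : (γ : ℝ) ≠ 0 := fun h => hγ (Subtype.ext h)
    have hγpos : (0 : ℝ) < γ := lt_of_le_of_ne γ.2.1 (Ne.symm hγne)
    set α : unitInterval := ⟨(β : ℝ) / γ, div_nonneg β.2.1 γ.2.1, (div_le_one hγpos).2 hle⟩
      with hα
    have hmemC : (fun s => max (α * (fun s => max (γ * z s) (e s)) s) (c s)) ∈ C :=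
      hC _ hqC c hc α
    have heq : (fun s => max (α * (fun s => max (γ * z s) (e s)) s) (c s))
        = fun s => max (α * e s) ((fun s => max (β * z s) (c s)) s) := by
      funext s
      apply Subtype.ext
      simp only [coe_max, coe_mul]
      rw [mul_max_of_nonneg _ _ α.2.1, ← mul_assoc]
      have hαγ : (α : ℝ) * (γ : ℝ) = (β : ℝ) := div_mul_cancel₀ _ hγne
      rw [hαγ]
      simp only [max_comm, max_assoc, max_left_comm]
    exact ⟨_, hmemC, heq ▸ hE e he _ hpE α⟩

/-- Pasch-type lemma: from witnesses of mutual maximality we extract a common point. -/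
lemma common_point {C E : Set (S → unitInterval)} (hC : BCube C) (hE : BCube E)
    {z p q : S → unitInterval}
    (hpH : p ∈ Hull C z) (hpE : p ∈ E) (hqH : q ∈ Hull E z) (hqC : q ∈ C) :
    ∃ r, r ∈ C ∧ r ∈ E := by
  rcases hpH with ⟨β, c, hc, rfl⟩ | ⟨w, hw, rfl⟩ <;>
    rcases hqH with ⟨γ, e, he, rfl⟩ | ⟨v, hv, rfl⟩
  · -- both form 1
    rcases le_total β γ with hle | hle
    · exact common_point_11 hC hE hc he hpE hqC hle
    · obtain ⟨r, hrE, hrC⟩ := common_point_11 hE hC he hc hqC hpE hle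
      exact ⟨r, hrC, hrE⟩
  · -- p form 1, q form 2 : q = z ∨ v with v ∈ Sub E
    refine ⟨fun s => max (β * (fun s => max (z s) (v s)) s) (c s), hC _ hqC c hc β, ?_⟩
    have heq : (fun s => max (β * (fun s => max (z s) (v s)) s) (c s))
        = fun s => max ((fun s => max (β * z s) (c s)) s) ((fun s => β * v s) s) := by
      funext s
      apply Subtype.ext
      simp only [coe_max, coe_mul]
      rw [mul_max_of_nonneg _ _ β.2.1]
      simp only [max_comm, max_assoc, max_left_comm]
    exact heq ▸ Sub.join_mem hE (hv.scale β) _ hpE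
  · -- p form 2 : p = z ∨ w with w ∈ Sub C, q form 1
    refine ⟨_, ?_, hE _ hpE e he γ⟩
    have heq : (fun s => max (γ * (fun s => max (z s) (w s)) s) (e s))
        = fun s => max ((fun s => max (γ * z s) (e s)) s) ((fun s => γ * w s) s) := by
      funext s
      apply Subtype.ext
      simp only [coe_max, coe_mul]
      rw [mul_max_of_nonneg _ _ γ.2.1]
      simp only [max_comm, max_assoc, max_left_comm]
    exact heq ▸ Sub.join_mem hC (hw.scale γ) _ hqC
  · -- both form 2
    refine ⟨_, ?_, Sub.join_mem hE hv _ hpE⟩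
    have heq : (fun s => max ((fun s => max (z s) (w s)) s) (v s))
        = fun s => max ((fun s => max (z s) (v s)) s) (w s) := by
      funext s
      apply Subtype.ext
      simp only [coe_max]
      simp only [max_comm, max_assoc, max_left_comm]
    exact heq ▸ Sub.join_mem hC hw _ hqC

/-- Stone-type separation for B-convex sets (purely order-algebraic, no topology). -/
lemma stone {A' D' : Set (S → unitInterval)} (hA' : BCube A') (hD' : BCube D')
    (hA'ne : A'.Nonempty) (hD'ne : D'.Nonempty) (hdis : A' ∩ D' = ∅) :
    ∃ C E : Set (S → unitInterval),
      BCube C ∧ BCube E ∧ A' ⊆ C ∧ D' ⊆ E ∧ E ∩ C = ∅ ∧ C ∪ E = univ := by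
  -- Zorn for C
  have hzorn : ∀ (W : Set (S → unitInterval)) (𝒮 : Set (Set (S → unitInterval))),
      (𝒮 = {C | BCube C ∧ C ∩ W = ∅}) →
      ∀ c ⊆ 𝒮, IsChain (· ⊆ ·) c → c.Nonempty → ∃ ub ∈ 𝒮, ∀ s ∈ c, s ⊆ ub := by
    rintro W 𝒮 rfl c hc hchain hcne
    refine ⟨⋃₀ c, ⟨?_, ?_⟩, fun s hs => subset_sUnion_of_mem hs⟩
    · intro x hx y hy α
      obtain ⟨C₁, hC₁, hx⟩ := hx
      obtain ⟨C₂, hC₂, hy⟩ := hy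
      rcases hchain.total hC₁ hC₂ with h | h
      · exact ⟨C₂, hC₂, (hc hC₂).1 x (h hx) y hy α⟩
      · exact ⟨C₁, hC₁, (hc hC₁).1 x hx y (h hy) α⟩
    · rw [eq_empty_iff_forall_notMem]
      rintro x ⟨⟨C₁, hC₁, hxC₁⟩, hxW⟩
      exact (eq_empty_iff_forall_notMem.1 (hc hC₁).2) x ⟨hxC₁, hxW⟩
  obtain ⟨C, hA'C, hCmax⟩ := zorn_subset_nonempty {C | BCube C ∧ C ∩ D' = ∅}
    (hzorn D' _ rfl) A' ⟨hA', hdis⟩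
  have hCbc : BCube C := hCmax.prop.1
  have hCD' : C ∩ D' = ∅ := hCmax.prop.2
  obtain ⟨E, hD'E, hEmax⟩ := zorn_subset_nonempty {E | BCube E ∧ E ∩ C = ∅}
    (hzorn C _ rfl) D' ⟨hD', by
      rw [eq_empty_iff_forall_notMem]
      rintro x ⟨hxD', hxC⟩
      exact (eq_empty_iff_forall_notMem.1 hCD') x ⟨hxC, hxD'⟩⟩
  have hEbc : BCube E := hEmax.prop.1
  have hEC : E ∩ C = ∅ := hEmax.prop.2
  refine ⟨C, E, hCbc, hEbc, hA'C, hD'E, hEC, ?_⟩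
  rw [eq_univ_iff_forall]
  intro z
  by_contra hz
  rw [mem_union] at hz
  push_neg at hz
  obtain ⟨hzC, hzE⟩ := hz
  have hCne : C.Nonempty := hA'ne.mono hA'C
  have hEne : E.Nonempty := hD'ne.mono hD'E
  -- maximality of C: Hull C z must meet D'
  have hpex : ∃ p, p ∈ Hull C z ∧ p ∈ D' := by
    by_contra h
    push_neg at h
    have hmem : Hull C z ∈ {C | BCube C ∧ C ∩ D' = ∅} := by
      refine ⟨bcube_hull hCbc z, eq_empty_iff_forall_notMem.2 ?_⟩
      rintro x ⟨hx1, hx2⟩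
      exact h x hx1 hx2
    have := hCmax.le_of_ge hmem (subset_hull z)
    exact hzC (this (mem_hull_self hCne))
  have hqex : ∃ q, q ∈ Hull E z ∧ q ∈ C := by
    by_contra h
    push_neg at h
    have hmem : Hull E z ∈ {E | BCube E ∧ E ∩ C = ∅} := by
      refine ⟨bcube_hull hEbc z, eq_empty_iff_forall_notMem.2 ?_⟩
      rintro x ⟨hx1, hx2⟩
      exact h x hx1 hx2
    have := hEmax.le_of_ge hmem (subset_hull z)
    exact hzE (this (mem_hull_self hEne))
  obtain ⟨p, hpH, hpD'⟩ := hpex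
  obtain ⟨q, hqH, hqC⟩ := hqex
  obtain ⟨r, hrC, hrE⟩ := common_point hCbc hEbc hpH (hD'E hpD') hqH hqC
  exact (eq_empty_iff_forall_notMem.1 hEC) r ⟨hrE, hrC⟩

lemma bcube_closure {C : Set (S → unitInterval)} (hC : BCube C) : BCube (closure C) := by
  intro x hx y hy α
  have hcont : Continuous fun p : (S → unitInterval) × (S → unitInterval) =>
      (fun s => max (α * p.1 s) (p.2 s) : S → unitInterval) := by
    apply continuous_pi
    intro s
    have h1 : Continuous fun p : (S → unitInterval) × (S → unitInterval) => p.1 s :=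
      (continuous_apply s).comp continuous_fst
    have h2 : Continuous fun p : (S → unitInterval) × (S → unitInterval) => p.2 s :=
      (continuous_apply s).comp continuous_snd
    have h3 : Continuous fun x : unitInterval => α * x := by
      apply Continuous.subtype_mk
        (by fun_prop : Continuous fun x : unitInterval => (α : ℝ) * (x : ℝ))
    exact (h3.comp h1).max h2
  exact map_mem_closure₂
    (f := fun (x y : S → unitInterval) => (fun s => max (α * x s) (y s) : S → unitInterval))
    hcont hx hy (fun a ha b hb => hC a ha b hb α)

lemma bcube_empty : BCube (∅ : Set (S → unitInterval)) := fun x hx => absurd hx (notMem_empty x)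

lemma bcube_univ : BCube (univ : Set (S → unitInterval)) := fun _ _ _ _ _ => mem_univ _

lemma isOpen_nbhd (F : Finset S) (a : S → unitInterval) (ε : ℝ) :
    IsOpen {x : S → unitInterval | ∀ s ∈ F, |(x s : ℝ) - a s| < ε} := by
  have h : {x : S → unitInterval | ∀ s ∈ F, |(x s : ℝ) - a s| < ε}
      = ⋂ s ∈ F, {x : S → unitInterval | |(x s : ℝ) - a s| < ε} := by
    ext x; simp
  rw [h]
  refine isOpen_biInter_finset fun s _ => ?_
  have hc : Continuous fun x : S → unitInterval => (x s : ℝ) :=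
    continuous_subtype_val.comp (continuous_apply s)
  have h2 : {x : S → unitInterval | |(x s : ℝ) - a s| < ε}
      = (fun x : S → unitInterval => (x s : ℝ)) ⁻¹' (Metric.ball (a s : ℝ) ε) := by
    ext x; simp [Metric.mem_ball, Real.dist_eq]
  rw [h2]
  exact (Metric.isOpen_ball).preimage hc

/-- fattening of a B-convex set is B-convex -/
lemma bcube_fatten {A : Set (S → unitInterval)} (hA : BCube A) (F : Finset S) (ε : ℝ) :
    BCube {x : S → unitInterval | ∃ a ∈ A, ∀ s ∈ F, |(x s : ℝ) - a s| ≤ ε} := by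
  rintro x ⟨a, ha, hxa⟩ y ⟨a', ha', hya⟩ α
  refine ⟨_, hA a ha a' ha' α, fun s hs => ?_⟩
  have key : |max ((α : ℝ) * x s) ((y s : ℝ)) - max ((α : ℝ) * a s) ((a' s : ℝ))|
      ≤ max |(α : ℝ) * x s - (α : ℝ) * a s| |(y s : ℝ) - a' s| :=
    abs_max_sub_max_le_max _ _ _ _
  have h1 : |(α : ℝ) * x s - (α : ℝ) * a s| ≤ ε := by
    rw [← mul_sub, abs_mul, abs_of_nonneg α.2.1]
    calc (α : ℝ) * |(x s : ℝ) - a s| ≤ 1 * |(x s : ℝ) - a s| :=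
          mul_le_mul_of_nonneg_right α.2.2 (abs_nonneg _)
      _ = |(x s : ℝ) - a s| := one_mul _
      _ ≤ ε := hxa s hs
  show |((max (α * x s) (y s) : unitInterval) : ℝ) - ((max (α * a s) (a' s) : unitInterval) : ℝ)| ≤ ε
  rw [coe_max, coe_max, coe_mul, coe_mul]
  exact key.trans (max_le h1 (hya s hs))

/-- compactness: a uniform finite-coordinate gap between disjoint compacts -/
lemma exists_gap {A D : Set (S → unitInterval)} (hAc : IsCompact A) (hDc : IsCompact D)
    (hdisj : Disjoint A D) (hAne : A.Nonempty) (hDne : D.Nonempty) :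
    ∃ (F : Finset S) (δ : ℝ), 0 < δ ∧
      ∀ a ∈ A, ∀ d ∈ D, δ ≤ ∑ s ∈ F, |(a s : ℝ) - d s| := by
  have hK : IsCompact (A ×ˢ D) := hAc.prod hDc
  have hUopen : ∀ s : S, IsOpen {p : (S → unitInterval) × (S → unitInterval) | p.1 s ≠ p.2 s} :=
    fun s => isOpen_ne_fun ((continuous_apply s).comp continuous_fst)
      ((continuous_apply s).comp continuous_snd)
  have hcover : A ×ˢ D ⊆ ⋃ s : S, {p : (S → unitInterval) × (S → unitInterval) | p.1 s ≠ p.2 s} := by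
    rintro ⟨a, d⟩ ⟨ha, hd⟩
    have hne : a ≠ d := fun h => hdisj.ne_of_mem ha hd h
    obtain ⟨s, hs⟩ := Function.ne_iff.1 hne
    exact mem_iUnion.2 ⟨s, hs⟩
  obtain ⟨F, hF⟩ := hK.elim_finite_subcover _ hUopen hcover
  set g : (S → unitInterval) × (S → unitInterval) → ℝ :=
    fun p => ∑ s ∈ F, |(p.1 s : ℝ) - p.2 s| with hg
  have hgcont : Continuous g := by
    apply continuous_finset_sum
    intro s _
    exact ((continuous_subtype_val.comp ((continuous_apply s).comp continuous_fst)).sub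
      (continuous_subtype_val.comp ((continuous_apply s).comp continuous_snd))).abs
  obtain ⟨p₀, hp₀, hmin⟩ := hK.exists_isMinOn (hAne.prod hDne) hgcont.continuousOn
  refine ⟨F, g p₀, ?_, ?_⟩
  · obtain ⟨s, hsmem, hsne⟩ := mem_iUnion₂.1 (hF hp₀)
    refine Finset.sum_pos' (fun t _ => abs_nonneg _) ⟨s, hsmem, ?_⟩
    exact abs_pos.2 (sub_ne_zero.2 fun h => hsne (Subtype.ext h))
  · intro a ha d hd
    exact isMinOn_iff.1 hmin (a, d) ⟨ha, hd⟩

lemma fatten_interior {A : Set (S → unitInterval)} (F : Finset S) {ε : ℝ} (hε : 0 < ε) :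
    A ⊆ interior {x : S → unitInterval | ∃ a ∈ A, ∀ s ∈ F, |(x s : ℝ) - a s| ≤ ε} := by
  intro a ha
  rw [mem_interior]
  refine ⟨{x | ∀ s ∈ F, |(x s : ℝ) - a s| < ε}, ?_, isOpen_nbhd F a ε,
    fun s _ => by simpa using hε⟩
  exact fun x hx => ⟨a, ha, fun s hs => (hx s hs).le⟩

lemma fatten_disj {A D : Set (S → unitInterval)} {F : Finset S} {δ ε : ℝ}
    (hgap : ∀ a ∈ A, ∀ d ∈ D, δ ≤ ∑ s ∈ F, |(a s : ℝ) - d s|)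
    (hδpos : 0 < δ) (hεdef : ε = δ / (2 * F.card + 2)) :
    {x : S → unitInterval | ∃ a ∈ A, ∀ s ∈ F, |(x s : ℝ) - a s| ≤ ε} ∩
      {x : S → unitInterval | ∃ d ∈ D, ∀ s ∈ F, |(x s : ℝ) - d s| ≤ ε} = ∅ := by
  rw [eq_empty_iff_forall_notMem]
  rintro x ⟨⟨a, ha, hxa⟩, ⟨d, hd, hxd⟩⟩
  have hsum : ∑ s ∈ F, |(a s : ℝ) - d s| ≤ F.card * (2 * ε) := by
    calc ∑ s ∈ F, |(a s : ℝ) - d s| ≤ ∑ _s ∈ F, (2 * ε) := by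
          apply Finset.sum_le_sum
          intro s hs
          calc |(a s : ℝ) - d s| = |((a s : ℝ) - x s) + ((x s : ℝ) - d s)| := by ring_nf
            _ ≤ |(a s : ℝ) - x s| + |(x s : ℝ) - d s| := abs_add_le _ _
            _ ≤ ε + ε := add_le_add (by rw [abs_sub_comm]; exact hxa s hs) (hxd s hs)
            _ = 2 * ε := by ring
      _ = F.card * (2 * ε) := by rw [Finset.sum_const, nsmul_eq_mul]
  have hlt : (F.card : ℝ) * (2 * ε) < δ := by
    have h2 : (0:ℝ) < 2 * F.card + 2 := by positivity
    have he2 : (F.card : ℝ) * (2 * ε) = δ * (2 * F.card) / (2 * F.card + 2) := by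
      rw [hεdef]; ring
    rw [he2, div_lt_iff₀ h2]
    nlinarith [hδpos]
  exact absurd ((hgap a ha d hd).trans hsum) (not_le.2 hlt)

end BCubeAux

open BCubeAux in
set_option maxHeartbeats 1000000 in
/-- Normality (T₄) of the B-convexity on `[0,1]^S`: disjoint compact B-convex sets are
screened by two closed B-convex sets covering the cube. -/
theorem bconvex_cube_normal {S : Type*} (A D : Set (S → unitInterval))
    (hAc : IsCompact A) (hA : BCube A) (hDc : IsCompact D) (hD : BCube D)
    (hdisj : Disjoint A D) :
    ∃ L₁ L₂ : Set (S → unitInterval), IsClosed L₁ ∧ IsClosed L₂ ∧ BCube L₁ ∧ BCube L₂ ∧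
      L₁ ∪ L₂ = Set.univ ∧ Disjoint L₁ D ∧ Disjoint L₂ A := by
  rcases A.eq_empty_or_nonempty with rfl | hAne
  · exact ⟨∅, univ, isClosed_empty, isClosed_univ, bcube_empty, bcube_univ, by simp,
      empty_disjoint D, by simp⟩
  rcases D.eq_empty_or_nonempty with rfl | hDne
  · exact ⟨univ, ∅, isClosed_univ, isClosed_empty, bcube_univ, bcube_empty, by simp,
      by simp, empty_disjoint A⟩
  obtain ⟨F, δ, hδpos, hgap⟩ := exists_gap hAc hDc hdisj hAne hDne
  obtain ⟨ε, hεdef, hεpos⟩ : ∃ ε : ℝ, ε = δ / (2 * F.card + 2) ∧ 0 < ε :=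
    ⟨_, rfl, by positivity⟩
  have hintA : A ⊆ interior {x : S → unitInterval | ∃ a ∈ A, ∀ s ∈ F, |(x s : ℝ) - a s| ≤ ε} :=
    fatten_interior F hεpos
  have hintD : D ⊆ interior {x : S → unitInterval | ∃ d ∈ D, ∀ s ∈ F, |(x s : ℝ) - d s| ≤ ε} :=
    fatten_interior F hεpos
  have hdisAD := fatten_disj hgap hδpos hεdef
  obtain ⟨C, E, hCbc, hEbc, hA'C, hD'E, hEC, hcover⟩ :=
    stone (bcube_fatten hA F ε) (bcube_fatten hD F ε)
      (hAne.mono (hintA.trans interior_subset)) (hDne.mono (hintD.trans interior_subset)) hdisAD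
  refine ⟨closure C, closure E, isClosed_closure, isClosed_closure,
    bcube_closure hCbc, bcube_closure hEbc, ?_, ?_, ?_⟩
  · apply eq_univ_of_univ_subset
    calc (univ : Set (S → unitInterval)) = C ∪ E := hcover.symm
      _ ⊆ closure C ∪ closure E := union_subset_union subset_closure subset_closure
  · -- Disjoint (closure C) D
    have hCD' : C ⊆ (interior {x : S → unitInterval | ∃ d ∈ D, ∀ s ∈ F, |(x s : ℝ) - d s| ≤ ε})ᶜ := by
      intro x hx hxint
      have hxE : x ∈ E := hD'E (interior_subset hxint)
      exact (eq_empty_iff_forall_notMem.1 hEC) x ⟨hxE, hx⟩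
    have hclC := closure_minimal hCD' (isOpen_interior.isClosed_compl)
    exact disjoint_left.2 fun x hx hxD => (hclC hx) (hintD hxD)
  · -- Disjoint (closure E) A
    have hEA' : E ⊆ (interior {x : S → unitInterval | ∃ a ∈ A, ∀ s ∈ F, |(x s : ℝ) - a s| ≤ ε})ᶜ := by
      intro x hx hxint
      have hxC : x ∈ C := hA'C (interior_subset hxint)
      exact (eq_empty_iff_forall_notMem.1 hEC) x ⟨hx, hxC⟩
    have hclE := closure_minimal hEA' (isOpen_interior.isClosed_compl)
    exact disjoint_left.2 fun x hx hxA => (hclE hx) (hintA hxA)
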